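/- Let m ≥ 3 and 1 ≤ k ≤ m/2 be integers. Then the minimal degree of the alternating group Alt(m) acting on the set of k-element subsets of {1,…,m} (a permutation acts on a subset by taking its image) is at most 3·C(m−2, k−1), where C denotes the binomial coefficient. -/

import Mathlib

open scoped Pointwise

noncomputable def minDegree (G Ω : Type*) [Group G] [MulAction G Ω] : ℕ :=
  sInf {n | ∃ g : G, g ≠ 1 ∧ n = Nat.card {ω : Ω | g • ω ≠ ω}}

def kSubsets (m k : ℕ) : SubMulAction (Equiv.Perm (Fin m)) (Finset (Fin m)) where
  carrier := {s | s.card = k}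
  smul_mem' := by
    intro σ s hs
    simpa [Finset.card_smul_finset] using hs

theorem minDegree_alternating_subsets_le (m k : ℕ) (hm : 3 ≤ m) (hk1 : 1 ≤ k)
    (hk2 : 2 * k ≤ m) :
    minDegree (alternatingGroup (Fin m)) (kSubsets m k) ≤ 3 * (m - 2).choose (k - 1) := by
  classical
  obtain ⟨n, rfl⟩ : ∃ n, m = n + 3 := ⟨m - 3, by omega⟩
  set a : Fin (n+3) := ⟨0, by omega⟩ with ha
  set b : Fin (n+3) := ⟨1, by omega⟩ with hb
  set c : Fin (n+3) := ⟨2, by omega⟩ with hc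
  have hab : a ≠ b := by simp [ha, hb, Fin.ext_iff]
  have hbc : b ≠ c := by simp [hb, hc, Fin.ext_iff]
  have hac : a ≠ c := by simp [ha, hc, Fin.ext_iff]
  set g₀ : Equiv.Perm (Fin (n+3)) := Equiv.swap a b * Equiv.swap b c with hg₀
  have hsign : g₀ ∈ alternatingGroup (Fin (n+3)) := by
    simp [Equiv.Perm.mem_alternatingGroup, hg₀, Equiv.Perm.sign_swap, hab, hbc]
  set g : alternatingGroup (Fin (n+3)) := ⟨g₀, hsign⟩ with hgdef
  have hga : g₀ a = b := by
    simp [hg₀, Equiv.Perm.mul_apply, Equiv.swap_apply_of_ne_of_ne hab hac]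
  have hgb : g₀ b = c := by
    rw [hg₀, Equiv.Perm.mul_apply, Equiv.swap_apply_left,
      Equiv.swap_apply_of_ne_of_ne hac.symm hbc.symm]
  have hgc : g₀ c = a := by
    rw [hg₀, Equiv.Perm.mul_apply, Equiv.swap_apply_right, Equiv.swap_apply_right]
  have hfix : ∀ x : Fin (n+3), x ≠ a → x ≠ b → x ≠ c → g₀ x = x := by
    intro x hxa hxb hxc
    simp [hg₀, Equiv.Perm.mul_apply, Equiv.swap_apply_of_ne_of_ne hxb hxc,
      Equiv.swap_apply_of_ne_of_ne hxa hxb]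
  have hg1 : g ≠ 1 := by
    intro h
    have : g₀ a = a := by
      have : g₀ = 1 := congrArg Subtype.val h
      simp [this]
    rw [hga] at this
    exact hab this.symm
  -- the codomain finset
  set T : Finset ((_ : Fin (n+3)) × Finset (Fin (n+3))) :=
    ({a, b, c} : Finset (Fin (n+3))).sigma
      (fun x => (Finset.univ \ {x, g₀ x}).powersetCard (k-1)) with hT
  have hTcard : T.card = 3 * (n+1).choose (k-1) := by
    rw [hT, Finset.card_sigma]
    have : ∀ x ∈ ({a, b, c} : Finset (Fin (n+3))),
        ((Finset.univ \ {x, g₀ x}).powersetCard (k-1)).card = (n+1).choose (k-1) := by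
      intro x hx
      rw [Finset.card_powersetCard]
      have hne : x ≠ g₀ x := by
        fin_cases hx <;> simp [hga, hgb, hgc, hab, hbc, hac, hac.symm]
      have h2 : ({x, g₀ x} : Finset (Fin (n+3))).card = 2 := by
        rw [Finset.card_insert_of_notMem (by simpa using hne), Finset.card_singleton]
      rw [Finset.card_sdiff_of_subset (Finset.subset_univ _), h2, Finset.card_univ, Fintype.card_fin]
      have h32 : n + 3 - 2 = n + 1 := by omega
      rw [h32]
    rw [Finset.sum_congr rfl this, Finset.sum_const]
    have : ({a, b, c} : Finset (Fin (n+3))).card = 3 := by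
      rw [Finset.card_insert_of_notMem (by simp [hab, hac]),
        Finset.card_insert_of_notMem (by simpa using hbc), Finset.card_singleton]
    rw [this, smul_eq_mul]
  -- key existence
  have key : ∀ ω : ↥(kSubsets (n+3) k), g • ω ≠ ω → ∃ x, x ∈ (ω : Finset (Fin (n+3))) ∧
      g₀ x ∉ (ω : Finset (Fin (n+3))) := by
    intro ω hω
    by_contra h
    push_neg at h
    apply hω
    have himg : (ω : Finset (Fin (n+3))).image g₀ = (ω : Finset (Fin (n+3))) := by
      apply Finset.eq_of_subset_of_card_le
      · intro y hy
        obtain ⟨x, hx, rfl⟩ := Finset.mem_image.mp hy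
        exact h x hx
      · rw [Finset.card_image_of_injective _ g₀.injective]
    apply Subtype.ext
    show g • (ω : Finset (Fin (n+3))) = _
    rw [Finset.smul_finset_def]
    simpa [Equiv.Perm.smul_def, Subgroup.smul_def, hgdef] using himg
  choose x hx hgx using fun ω : {ω : ↥(kSubsets (n+3) k) | g • ω ≠ ω} => key ω.1 ω.2
  have hmem : ∀ ω : {ω : ↥(kSubsets (n+3) k) | g • ω ≠ ω},
      (⟨x ω, ((ω.1 : Finset (Fin (n+3)))).erase (x ω)⟩ :
        (_ : Fin (n+3)) × Finset (Fin (n+3))) ∈ T := by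
    intro ω
    have hxabc : x ω ∈ ({a, b, c} : Finset (Fin (n+3))) := by
      by_contra hmem'
      simp only [Finset.mem_insert, Finset.mem_singleton] at hmem'
      push_neg at hmem'
      exact hgx ω (by rw [hfix (x ω) hmem'.1 hmem'.2.1 hmem'.2.2]; exact hx ω)
    rw [hT, Finset.mem_sigma]
    refine ⟨hxabc, ?_⟩
    rw [Finset.mem_powersetCard]
    constructor
    · intro y hy
      rw [Finset.mem_erase] at hy
      rw [Finset.mem_sdiff]
      refine ⟨Finset.mem_univ y, ?_⟩
      simp only [Finset.mem_insert, Finset.mem_singleton]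
      push_neg
      exact ⟨hy.1, fun h => hgx ω (h ▸ hy.2)⟩
    · rw [Finset.card_erase_of_mem (hx ω)]
      have hcard : (ω.1 : Finset (Fin (n+3))).card = k := ω.1.2
      omega
  have hle : Nat.card {ω : ↥(kSubsets (n+3) k) | g • ω ≠ ω} ≤ T.card := by
    rw [← Nat.card_eq_finsetCard]
    have hinj : Function.Injective (fun ω : {ω : ↥(kSubsets (n+3) k) | g • ω ≠ ω} =>
        (⟨⟨x ω, ((ω.1 : Finset (Fin (n+3)))).erase (x ω)⟩, hmem ω⟩ : ↥T)) := by
      intro ω₁ ω₂ heq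
      have heq' := congrArg Subtype.val heq
      simp only [Sigma.mk.inj_iff, heq_iff_eq] at heq'
      obtain ⟨hx12, ht12⟩ := heq'
      have hs : (ω₁.1 : Finset (Fin (n+3))) = (ω₂.1 : Finset (Fin (n+3))) := by
        rw [← Finset.insert_erase (hx ω₁), ← Finset.insert_erase (hx ω₂), ht12, hx12]
      exact Subtype.ext (Subtype.ext hs)
    exact Nat.card_le_card_of_injective _ hinj
  calc minDegree (alternatingGroup (Fin (n+3))) (kSubsets (n+3) k)
      ≤ Nat.card {ω : ↥(kSubsets (n+3) k) | g • ω ≠ ω} := Nat.sInf_le ⟨g, hg1, rfl⟩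
    _ ≤ T.card := hle
    _ = 3 * (n + 3 - 2).choose (k-1) := by
        rw [hTcard]
        have h32 : n + 3 - 2 = n + 1 := by omega
        rw [h32]
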